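/- Let L be the out-Laplacian of an SCWB digraph on N ≥ 2 nodes with maximum degree 𝖽ᵐᵃˣ. Then every nonzero eigenvalue λ ∈ ℂ of L satisfies 1/(2 𝖽ᵐᵃˣ) ≤ (π/2 − |arg λ|)/|λ|. Consequently, for every β > 0, the quantity τ̄ = min over nonzero eigenvalues λ of L of (π/2 − |arg λ|)/(β |λ|) satisfies τ̄ ≥ 1/(2 β 𝖽ᵐᵃˣ). -/

import Mathlib

open Matrix Filter

/-- `A` is a nonnegative weighted adjacency matrix with zero diagonal. -/
def IsAdjacencyMatrix {N : ℕ} (A : Matrix (Fin N) (Fin N) ℝ) : Prop :=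
  (∀ i j, 0 ≤ A i j) ∧ ∀ i, A i i = 0

/-- `L` is the out-Laplacian of the weighted digraph with adjacency matrix `A`:
`L i i = ∑ j, A i j` and `L i j = -A i j` for `i ≠ j`. -/
def IsOutLaplacian {N : ℕ} (A L : Matrix (Fin N) (Fin N) ℝ) : Prop :=
  (∀ i, L i i = ∑ j, A i j) ∧ ∀ i j, i ≠ j → L i j = -A i j

/-- Strong connectivity: there is a directed edge from `u` to `v` iff `A v u > 0`, and any
ordered pair of distinct nodes is joined by a directed path. -/
def IsStronglyConnected {N : ℕ} (A : Matrix (Fin N) (Fin N) ℝ) : Prop :=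
  ∀ i j : Fin N, i ≠ j → Relation.TransGen (fun u v => 0 < A v u) i j

/-- Weight-balanced: the column sums of the out-Laplacian vanish, i.e. `1ᵀ L = 0`. -/
def IsWeightBalanced {N : ℕ} (L : Matrix (Fin N) (Fin N) ℝ) : Prop :=
  ∀ j, ∑ i, L i j = 0

/-- The all-ones vector `1_N`. -/
noncomputable def ones (N : ℕ) : EuclideanSpace ℝ (Fin N) := WithLp.toLp 2 (fun _ => 1)

/-- The average `(1/N) ∑ j v j` of the entries of a vector. -/
noncomputable def avg {N : ℕ} (v : EuclideanSpace ℝ (Fin N)) : ℝ := (∑ j, v j) / N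

/-- The projection `Π_N v = v - avg(v) • 1_N` onto the orthogonal complement of `1_N`. -/
noncomputable def proj {N : ℕ} (v : EuclideanSpace ℝ (Fin N)) : EuclideanSpace ℝ (Fin N) :=
  v - avg v • ones N

/-- lower bound `1/(2 dᵐᵃˣ) ≤ (π/2 - |arg λ|)/|λ|` for every nonzero eigenvalue
of the out-Laplacian of an SCWB digraph, and hence `τ̄ ≥ 1/(2 β dᵐᵃˣ)`. -/
theorem statement4 {N : ℕ} (hN : 2 ≤ N)
    (A L : Matrix (Fin N) (Fin N) ℝ)
    (hA : IsAdjacencyMatrix A) (hL : IsOutLaplacian A L)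
    (hSC : IsStronglyConnected A) (hWB : IsWeightBalanced L)
    (dmax : ℝ) (hdmax : IsGreatest (Set.range fun i => ∑ j, A i j) dmax) :
    (∀ lam ∈ spectrum ℂ (L.map Complex.ofReal), lam ≠ 0 →
      1 / (2 * dmax) ≤ (Real.pi / 2 - |lam.arg|) / ‖lam‖) ∧
    ∀ β > (0:ℝ), ∀ τbar : ℝ,
      IsLeast {t : ℝ | ∃ lam ∈ spectrum ℂ (L.map Complex.ofReal), lam ≠ 0 ∧
          t = (Real.pi / 2 - |lam.arg|) / (β * ‖lam‖)} τbar →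
      1 / (2 * β * dmax) ≤ τbar := by
    classical
  set M := L.map Complex.ofReal with hM
  have key : ∀ lam ∈ spectrum ℂ M, lam ≠ 0 →
      1 / (2 * dmax) ≤ (Real.pi / 2 - |lam.arg|) / ‖lam‖ := by
    intro lam hmem hne
    -- transfer to eigenvalue of toLin'
    have hlin : Matrix.toLinAlgEquiv' M = Matrix.toLin' M := by
      apply LinearMap.ext; intro v
      rw [Matrix.toLinAlgEquiv'_apply, Matrix.toLin'_apply]
    have hev : Module.End.HasEigenvalue (Matrix.toLin' M) lam := by
      rw [← hlin]
      exact Module.End.hasEigenvalue_iff_mem_spectrum.mpr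
        ((AlgEquiv.spectrum_eq Matrix.toLinAlgEquiv' M).symm ▸ hmem)
    obtain ⟨k, hk⟩ := eigenvalue_mem_ball hev
    set d : ℝ := ∑ j, A k j with hd
    have hd0 : 0 ≤ d := Finset.sum_nonneg fun j _ => hA.1 k j
    have hdm : d ≤ dmax := hdmax.2 ⟨k, rfl⟩
    -- the Gershgorin radius equals d
    have hrad : (∑ j ∈ Finset.univ.erase k, ‖M k j‖) = d := by
      rw [hd, ← Finset.add_sum_erase _ _ (Finset.mem_univ k), hA.2 k, zero_add]
      refine Finset.sum_congr rfl fun j hj => ?_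
      have hjk : k ≠ j := fun h => (Finset.mem_erase.mp hj).1 h.symm
      simp [hM, Matrix.map_apply, hL.2 k j hjk, abs_of_nonneg (hA.1 k j)]
    have hdiag : M k k = (d : ℂ) := by
      simp [hM, Matrix.map_apply, hL.1 k, hd]
    rw [Metric.mem_closedBall, hrad, hdiag] at hk
    -- |lam - d| ≤ d  gives  |lam|^2 ≤ 2 d lam.re
    have hsq : (‖lam‖) ^ 2 ≤ 2 * d * lam.re := by
      have h1 : ‖lam - (d : ℂ)‖ ≤ d := by rwa [dist_eq_norm] at hk
      have h2 : (‖lam - (d:ℂ)‖) ^ 2 ≤ d ^ 2 := by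
        have := norm_nonneg (lam - (d:ℂ))
        nlinarith
      have h3 : (‖lam - (d:ℂ)‖) ^ 2
          = (lam.re - d)^2 + lam.im^2 := by
        rw [Complex.sq_norm, Complex.normSq_apply]
        simp [Complex.sub_re, Complex.sub_im]
        ring
      have h4 : (‖lam‖) ^ 2 = lam.re ^ 2 + lam.im ^ 2 := by
        rw [Complex.sq_norm, Complex.normSq_apply]; ring
      nlinarith
    have habs : 0 < ‖lam‖ := norm_pos_iff.mpr hne
    have hre : 0 < lam.re := by nlinarith
    have hdpos : 0 < dmax := by nlinarith
    set r := ‖lam‖ with hr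
    -- cos(arg lam) = re/|lam| ≥ r/(2 dmax)
    have hcos : r / (2 * dmax) ≤ Real.cos lam.arg := by
      rw [Complex.cos_arg hne, ← hr]
      rw [div_le_div_iff₀ (by positivity) habs]
      calc r * r = r ^ 2 := by ring
        _ ≤ 2 * d * lam.re := hsq
        _ ≤ lam.re * (2 * dmax) := by nlinarith
    have hargle : |lam.arg| < Real.pi / 2 :=
      Complex.abs_arg_lt_pi_div_two_iff.mpr (Or.inl hre)
    have hsin : r / (2 * dmax) ≤ Real.pi / 2 - |lam.arg| := by
      have h5 : Real.sin (Real.pi / 2 - |lam.arg|) = Real.cos lam.arg := by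
        rw [Real.sin_pi_div_two_sub, Real.cos_abs]
      have h6 : Real.sin (Real.pi / 2 - |lam.arg|) ≤ Real.pi / 2 - |lam.arg| :=
        Real.sin_le (by linarith)
      linarith
    rw [le_div_iff₀ habs]
    calc 1 / (2 * dmax) * r = r / (2 * dmax) := by ring
      _ ≤ _ := hsin
  refine ⟨key, ?_⟩
  intro β hβ τbar hτ
  obtain ⟨lam, hmem, hne, ht⟩ := hτ.1
  have h1 := key lam hmem hne
  have habs : 0 < ‖lam‖ := norm_pos_iff.mpr hne
  have : (Real.pi / 2 - |lam.arg|) / (β * ‖lam‖)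
      = ((Real.pi / 2 - |lam.arg|) / ‖lam‖) / β := by
    rw [div_div]; ring_nf
  rw [ht, this]
  calc 1 / (2 * β * dmax) = (1 / (2 * dmax)) / β := by
        rw [div_div]; ring_nf
    _ ≤ _ := by gcongr
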